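/- In the random partition with p* = 2√(5 log n)/Δ^{1/3} and Δ ≤ (n/log n)^{3/4}, the maximum degree Δ* of the left-over subgraph G* satisfies Δ* ≤ p*·Δ + √(5 p*·Δ·log n) = O(√n) with high probability. -/

import Mathlib

open MeasureTheory ProbabilityTheory Real Finset
set_option maxHeartbeats 1000000

/-- In the random partition where each vertex independently joins the
left-over subgraph `G*` with probability `p* = 2√(5 log n)/Δ^{1/3}` (modeled by an
independent random indicator `σ : V → Bool`), if `Δ ≤ (n/log n)^{3/4}`, then with high
probability the maximum degree of `G*` is at most `p*·Δ + √(5 p*·Δ·log n)`, and this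
deterministic bound is `O(√n)`, i.e. at most `C·√n` for a universal constant `C`. -/
theorem stmt6 {V : Type*} [Fintype V] [DecidableEq V]
    (G : SimpleGraph V) [DecidableRel G.Adj]
    (n Δ : ℕ) (hn : n = Fintype.card V) (hn2 : 2 ≤ n)
    (hΔ : ∀ v, G.degree v ≤ Δ) (hΔpos : 0 < Δ)
    (hΔub : (Δ : ℝ) ≤ ((n : ℝ) / Real.log n) ^ ((3 : ℝ) / 4))
    (pstar : ℝ) (hp : pstar = 2 * Real.sqrt (5 * Real.log n) / (Δ : ℝ) ^ ((1 : ℝ) / 3))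
    (μ : Measure (V → Bool)) [IsProbabilityMeasure μ]
    (hindep : iIndepFun (fun v (σ : V → Bool) => σ v) μ)
    (hmarg : ∀ v : V, μ {σ | σ v = true} = ENNReal.ofReal pstar) :
    (∃ c : ℝ, 1 ≤ c ∧
      ENNReal.ofReal (1 - 1 / (n : ℝ) ^ c) ≤
        μ {σ | ∀ v : V,
          ((((G.neighborFinset v).filter (fun u => σ u = true)).card : ℝ)
            ≤ pstar * Δ + Real.sqrt (5 * (pstar * Δ) * Real.log n))}) ∧
    (∃ C : ℝ, 0 < C ∧
      pstar * Δ + Real.sqrt (5 * (pstar * Δ) * Real.log n) ≤ C * Real.sqrt n) := by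
  classical
  have hVne : Nonempty V := by
    rw [← Fintype.card_pos_iff, ← hn]; omega
  set L : ℝ := Real.log n with hLdef
  have hn1R : (1 : ℝ) < (n : ℝ) := by exact_mod_cast hn2.trans_lt' (by norm_num)
  have hL2 : Real.log 2 ≤ L := Real.log_le_log (by norm_num) (by exact_mod_cast hn2)
  have hL0 : (0.693 : ℝ) ≤ L := le_trans (by linarith [Real.log_two_gt_d9]) hL2
  have hLpos : 0 < L := by linarith
  have hΔR : (0 : ℝ) < (Δ : ℝ) := by exact_mod_cast hΔpos
  have hΔ13pos : (0 : ℝ) < (Δ : ℝ) ^ ((1 : ℝ) / 3) := Real.rpow_pos_of_pos hΔR _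
  have hΔ23pos : (0 : ℝ) < (Δ : ℝ) ^ ((2 : ℝ) / 3) := Real.rpow_pos_of_pos hΔR _
  have hs5L : (0 : ℝ) < Real.sqrt (5 * L) := Real.sqrt_pos.2 (by linarith)
  have hps_pos : 0 < pstar := by
    rw [hp]; positivity
  -- pstar ≤ 1, forced by the marginal being a probability
  have hps1 : pstar ≤ 1 := by
    have h := hmarg (Classical.arbitrary V)
    have h2 : μ {σ : V → Bool | σ (Classical.arbitrary V) = true} ≤ 1 := prob_le_one
    rw [h] at h2
    exact ENNReal.ofReal_le_one.mp h2
  set m0 : ℝ := pstar * (Δ : ℝ) with hm0def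
  have hm0pos : 0 < m0 := mul_pos hps_pos hΔR
  -- Δ^(1/3) * Δ^(2/3) = Δ
  have hΔsplit : (Δ : ℝ) ^ ((1 : ℝ) / 3) * (Δ : ℝ) ^ ((2 : ℝ) / 3) = (Δ : ℝ) := by
    rw [← Real.rpow_add hΔR]
    norm_num
  have hm0eq : m0 = 2 * Real.sqrt (5 * L) * (Δ : ℝ) ^ ((2 : ℝ) / 3) := by
    rw [hm0def, hp, div_mul_eq_mul_div, div_eq_iff hΔ13pos.ne']
    linear_combination (-2 : ℝ) * Real.sqrt (5 * L) * hΔsplit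
  -- from pstar ≤ 1 : 2√(5L) ≤ Δ^(1/3)
  have hΔ13lb : 2 * Real.sqrt (5 * L) ≤ (Δ : ℝ) ^ ((1 : ℝ) / 3) := by
    have := hps1
    rw [hp, div_le_one hΔ13pos] at this
    exact this
  have hΔ23lb : 20 * L ≤ (Δ : ℝ) ^ ((2 : ℝ) / 3) := by
    have h1 : ((Δ : ℝ) ^ ((1 : ℝ) / 3)) ^ 2 = (Δ : ℝ) ^ ((2 : ℝ) / 3) := by
      rw [← Real.rpow_natCast ((Δ:ℝ) ^ ((1:ℝ)/3)) 2, ← Real.rpow_mul hΔR.le]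
      norm_num
    calc 20 * L = (2 * Real.sqrt (5 * L)) ^ 2 := by
          rw [mul_pow, Real.sq_sqrt (by linarith : (0:ℝ) ≤ 5 * L)]; ring
      _ ≤ ((Δ : ℝ) ^ ((1 : ℝ) / 3)) ^ 2 := by
          apply pow_le_pow_left₀ (by positivity) hΔ13lb
      _ = (Δ : ℝ) ^ ((2 : ℝ) / 3) := h1
  have hm0lb : 40 * L * Real.sqrt (5 * L) ≤ m0 := by
    rw [hm0eq]
    calc 40 * L * Real.sqrt (5 * L) = 2 * Real.sqrt (5 * L) * (20 * L) := by ring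
      _ ≤ 2 * Real.sqrt (5 * L) * ((Δ : ℝ) ^ ((2 : ℝ) / 3)) := by
          apply mul_le_mul_of_nonneg_left hΔ23lb (by positivity)
  -- the step size t of the Chernoff argument
  set t : ℝ := Real.sqrt (5 * L / m0) with htdef
  have ht0 : 0 ≤ t := Real.sqrt_nonneg _
  have ht2 : t ^ 2 = 5 * L / m0 := Real.sq_sqrt (by positivity)
  have hm0t2 : m0 * t ^ 2 = 5 * L := by
    rw [ht2]; field_simp
  have hsqrt3 : (1.7 : ℝ) ≤ Real.sqrt (5 * L) := by
    have : ((1.7 : ℝ)) = Real.sqrt (1.7 ^ 2) := by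
      rw [Real.sqrt_sq (by norm_num)]
    rw [this]
    apply Real.sqrt_le_sqrt; nlinarith
  have ht_le : t ≤ 9 / 20 := by
    have h1 : 5 * L / m0 ≤ (9 / 20 : ℝ) ^ 2 := by
      rw [div_le_iff₀ hm0pos]
      calc (5 : ℝ) * L = 5 * L * 1 := by ring
        _ ≤ (9/20 : ℝ)^2 * (40 * L * Real.sqrt (5 * L)) := by nlinarith
        _ ≤ (9/20 : ℝ)^2 * m0 := by nlinarith
    calc t ≤ Real.sqrt ((9/20 : ℝ)^2) := Real.sqrt_le_sqrt h1
      _ = 9 / 20 := Real.sqrt_sq (by norm_num)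
  -- the deviation a, and a = t * m0
  set a : ℝ := Real.sqrt (5 * m0 * L) with hadef
  have ha : a = t * m0 := by
    rw [hadef, htdef, ← Real.sqrt_sq hm0pos.le, ← Real.sqrt_mul (by positivity)]
    congr 1
    field_simp; ring_nf; rw [Real.sq_sqrt (sq_nonneg m0)]
  -- The indicator family
  set B : V → (V → Bool) → ℝ := fun u σ => if σ u = true then 1 else 0 with hBdef
  have hBmeas : ∀ u, Measurable (B u) := fun u =>
    (measurable_of_countable (fun b : Bool => if b = true then (1:ℝ) else 0)).comp
      (measurable_pi_apply u)
  have hBindep : iIndepFun B μ :=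
    hindep.comp (fun _ b => if b = true then (1:ℝ) else 0)
      (fun _ => measurable_of_countable _)
  set X : V → (V → Bool) → ℝ := fun v σ => ∑ u ∈ G.neighborFinset v, B u σ with hXdef
  have hXmeas : ∀ v, Measurable (X v) := fun v =>
    Finset.measurable_sum _ (fun u _ => hBmeas u)
  have hXle : ∀ v σ, X v σ ≤ (Δ : ℝ) := by
    intro v σ
    calc X v σ ≤ ∑ u ∈ G.neighborFinset v, 1 := by
          apply Finset.sum_le_sum
          intro u _
          by_cases h : σ u = true <;> simp [hBdef, h]
      _ = (G.degree v : ℝ) := by simp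
      _ ≤ (Δ : ℝ) := by exact_mod_cast hΔ v
  have hX0 : ∀ v σ, 0 ≤ X v σ := by
    intro v σ
    apply Finset.sum_nonneg
    intro u _
    by_cases h : σ u = true <;> simp [hBdef, h]
  -- mgf of a single Bernoulli
  have hmgfB : ∀ u, mgf (B u) μ t = 1 + pstar * (Real.exp t - 1) := by
    intro u
    have hA : MeasurableSet {σ : V → Bool | σ u = true} := by
      have : {σ : V → Bool | σ u = true} = (fun σ : V → Bool => σ u) ⁻¹' {true} := by
        ext σ; simp
      rw [this]
      exact measurable_pi_apply u (measurableSet_singleton true)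
    have hfun : (fun σ : V → Bool => Real.exp (t * B u σ))
        = fun σ => Set.indicator {σ : V → Bool | σ u = true}
            (fun _ => Real.exp t - 1) σ + 1 := by
      funext σ
      by_cases h : σ u = true
      · simp [hBdef, h, Set.indicator_apply, Set.mem_setOf_eq, mul_one]
      · simp [hBdef, h, Set.indicator_apply, Set.mem_setOf_eq]
    have hmgf_def : mgf (B u) μ t = ∫ σ, Real.exp (t * B u σ) ∂μ := rfl
    rw [hmgf_def, hfun, integral_add ((integrable_const _).indicator hA) (integrable_const 1),
      integral_indicator_const _ hA, integral_const, measureReal_def, measureReal_def, hmarg u, measure_univ,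
      ENNReal.toReal_ofReal hps_pos.le]
    simp [smul_eq_mul]
    ring
  -- mgf of X v
  have hmgfX : ∀ v, mgf (X v) μ t = (1 + pstar * (Real.exp t - 1)) ^ (G.degree v) := by
    intro v
    have hsum : X v = ∑ u ∈ G.neighborFinset v, B u := by
      funext σ; rw [hXdef]; simp [Finset.sum_apply]
    rw [hsum, hBindep.mgf_sum hBmeas (G.neighborFinset v)]
    rw [Finset.prod_congr rfl (fun u _ => hmgfB u), Finset.prod_const,
      SimpleGraph.card_neighborFinset_eq_degree]
  -- bound the mgf
  have hq0 : 0 ≤ pstar * (Real.exp t - 1) := by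
    have : (1:ℝ) ≤ Real.exp t := by
      rw [← Real.exp_zero]; exact Real.exp_le_exp.2 ht0
    nlinarith
  have hmgfX_le : ∀ v, mgf (X v) μ t ≤ Real.exp (m0 * (Real.exp t - 1)) := by
    intro v
    rw [hmgfX v]
    calc (1 + pstar * (Real.exp t - 1)) ^ (G.degree v)
        ≤ (Real.exp (pstar * (Real.exp t - 1))) ^ (G.degree v) := by
          apply pow_le_pow_left₀ (by linarith)
          linarith [Real.add_one_le_exp (pstar * (Real.exp t - 1))]
      _ = Real.exp ((G.degree v : ℝ) * (pstar * (Real.exp t - 1))) := by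
          rw [Real.exp_nat_mul]
      _ ≤ Real.exp (m0 * (Real.exp t - 1)) := by
          apply Real.exp_le_exp.2
          rw [hm0def]
          have hdeg : (G.degree v : ℝ) ≤ (Δ : ℝ) := by exact_mod_cast hΔ v
          nlinarith
  -- integrability
  have hint : ∀ v, Integrable (fun σ => Real.exp (t * X v σ)) μ := by
    intro v
    apply Integrable.mono' (integrable_const (Real.exp (t * (Δ : ℝ))))
      (((hXmeas v).const_mul t).exp.aestronglyMeasurable)
    apply ae_of_all
    intro σ
    rw [Real.norm_eq_abs, abs_of_nonneg (Real.exp_nonneg _)]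
    apply Real.exp_le_exp.2
    exact mul_le_mul_of_nonneg_left (hXle v σ) ht0
  -- the key exponent inequality
  have hexp3 : Real.exp t ≤ 1 + t + t ^ 2 / 2 + t ^ 3 * (2 / 9) := by
    have h := Real.exp_bound' ht0 (by linarith) (n := 3) (by norm_num)
    rw [Finset.sum_range_succ, Finset.sum_range_succ, Finset.sum_range_one] at h
    norm_num [Nat.factorial] at h
    linarith
  have hexponent : -t * (m0 + a) + m0 * (Real.exp t - 1) ≤ -2 * L := by
    rw [ha]
    have h1 : m0 * (Real.exp t - 1) ≤ m0 * (t + t ^ 2 / 2 + t ^ 3 * (2 / 9)) := by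
      apply mul_le_mul_of_nonneg_left _ hm0pos.le
      linarith
    have h2 : -t * (m0 + t * m0) + m0 * (t + t ^ 2 / 2 + t ^ 3 * (2 / 9))
        = m0 * t ^ 2 * (t * (2 / 9) - 1 / 2) := by ring
    have h3 : m0 * t ^ 2 * (t * (2 / 9) - 1 / 2) ≤ m0 * t ^ 2 * (-(2/5)) := by
      apply mul_le_mul_of_nonneg_left _ (by positivity)
      linarith
    rw [hm0t2] at h2 h3
    linarith
  -- per-vertex tail bound
  have hvert : ∀ v, μ {σ | m0 + a < X v σ} ≤ ENNReal.ofReal ((n : ℝ) ^ (-2 : ℝ)) := by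
    intro v
    have hchern := measure_ge_le_exp_mul_mgf (μ := μ) (X := X v) (m0 + a) ht0 (hint v)
    have hmono : μ {σ | m0 + a < X v σ} ≤ μ {σ | m0 + a ≤ X v σ} :=
      measure_mono (Set.setOf_subset_setOf.mpr (fun σ h => le_of_lt h))
    have hbound : Real.exp (-t * (m0 + a)) * mgf (X v) μ t ≤ (n : ℝ) ^ (-2 : ℝ) := by
      calc Real.exp (-t * (m0 + a)) * mgf (X v) μ t
          ≤ Real.exp (-t * (m0 + a)) * Real.exp (m0 * (Real.exp t - 1)) := by
            apply mul_le_mul_of_nonneg_left (hmgfX_le v) (Real.exp_nonneg _)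
        _ = Real.exp (-t * (m0 + a) + m0 * (Real.exp t - 1)) := by
            rw [← Real.exp_add]
        _ ≤ Real.exp (-2 * L) := Real.exp_le_exp.2 hexponent
        _ = (n : ℝ) ^ (-2 : ℝ) := by
            rw [Real.rpow_def_of_pos (by linarith : (0:ℝ) < (n:ℝ))]
            rw [hLdef]
            ring_nf
    refine le_trans hmono ?_
    rw [ENNReal.le_ofReal_iff_toReal_le (measure_ne_top μ _) (by positivity)]
    exact le_trans hchern hbound
  -- union bound
  have hmeas_bad : ∀ v, MeasurableSet {σ : V → Bool | m0 + a < X v σ} := fun v =>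
    measurableSet_lt measurable_const (hXmeas v)
  have hsetid : {σ : V → Bool | ∀ v : V,
      ((((G.neighborFinset v).filter (fun u => σ u = true)).card : ℝ)
        ≤ pstar * Δ + Real.sqrt (5 * (pstar * Δ) * Real.log n))}
      = (⋃ v : V, {σ : V → Bool | m0 + a < X v σ})ᶜ := by
    ext σ
    simp only [Set.mem_setOf_eq, Set.mem_compl_iff, Set.mem_iUnion, not_exists, not_lt]
    have hcard : ∀ v : V, ((((G.neighborFinset v).filter (fun u => σ u = true)).card : ℝ))
        = X v σ := by
      intro v
      rw [hXdef]
      simp only [Finset.card_filter]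
      push_cast
      apply Finset.sum_congr rfl
      intro u _
      by_cases h : σ u = true <;> simp [hBdef, h]
    constructor
    · intro h v; rw [← hcard v]; exact h v
    · intro h v; rw [hcard v]; exact h v
  have hunion : μ (⋃ v : V, {σ : V → Bool | m0 + a < X v σ})
      ≤ ENNReal.ofReal (1 / (n : ℝ)) := by
    calc μ (⋃ v : V, {σ : V → Bool | m0 + a < X v σ})
        ≤ ∑' v : V, μ {σ : V → Bool | m0 + a < X v σ} := measure_iUnion_le _
      _ = ∑ v : V, μ {σ : V → Bool | m0 + a < X v σ} := tsum_fintype _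
      _ ≤ ∑ v : V, ENNReal.ofReal ((n : ℝ) ^ (-2 : ℝ)) := Finset.sum_le_sum (fun v _ => hvert v)
      _ = (Fintype.card V : ENNReal) * ENNReal.ofReal ((n : ℝ) ^ (-2 : ℝ)) := by
          rw [Finset.sum_const, Finset.card_univ, nsmul_eq_mul]
      _ = ENNReal.ofReal ((n : ℝ) * (n : ℝ) ^ (-2 : ℝ)) := by
          rw [← hn, ENNReal.ofReal_mul (by positivity)]
          congr 1
          rw [ENNReal.ofReal_natCast]
      _ = ENNReal.ofReal (1 / (n : ℝ)) := by
          congr 1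
          rw [show ((n:ℝ) ^ (-2 : ℝ)) = ((n:ℝ) ^ (2 : ℕ))⁻¹ by
            rw [← Real.rpow_natCast (n:ℝ) 2, ← Real.rpow_neg (by positivity)]
            norm_num]
          field_simp
  constructor
  · refine ⟨1, le_refl 1, ?_⟩
    rw [hsetid, prob_compl_eq_one_sub (MeasurableSet.iUnion hmeas_bad)]
    have h1n : (0:ℝ) ≤ 1 / (n : ℝ) := by positivity
    rw [Real.rpow_one, ENNReal.ofReal_sub _ h1n]
    simp only [ENNReal.ofReal_one]
    exact tsub_le_tsub_left hunion 1
  · refine ⟨4 * Real.sqrt 5, by positivity, ?_⟩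
    -- m0 ≤ 2√5 √n
    have hΔ23ub : (Δ : ℝ) ^ ((2 : ℝ) / 3) ≤ ((n : ℝ) / L) ^ ((1 : ℝ) / 2) := by
      calc (Δ : ℝ) ^ ((2 : ℝ) / 3) ≤ (((n : ℝ) / L) ^ ((3 : ℝ) / 4)) ^ ((2 : ℝ) / 3) := by
            apply Real.rpow_le_rpow hΔR.le hΔub (by norm_num)
        _ = ((n : ℝ) / L) ^ ((1 : ℝ) / 2) := by
            rw [← Real.rpow_mul (by positivity)]
            norm_num
    have hm0ub : m0 ≤ 2 * Real.sqrt 5 * Real.sqrt n := by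
      rw [hm0eq]
      calc 2 * Real.sqrt (5 * L) * (Δ : ℝ) ^ ((2 : ℝ) / 3)
          ≤ 2 * Real.sqrt (5 * L) * ((n : ℝ) / L) ^ ((1 : ℝ) / 2) := by
            apply mul_le_mul_of_nonneg_left hΔ23ub (by positivity)
        _ = 2 * Real.sqrt (5 * L) * Real.sqrt ((n : ℝ) / L) := by
            rw [Real.sqrt_eq_rpow ((n:ℝ)/L)]
        _ = 2 * Real.sqrt (5 * L * ((n : ℝ) / L)) := by
            rw [mul_assoc, ← Real.sqrt_mul (by positivity : (0:ℝ) ≤ 5 * L)]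
        _ = 2 * Real.sqrt (5 * (n : ℝ)) := by
            congr 2
            field_simp
        _ = 2 * Real.sqrt 5 * Real.sqrt n := by
            rw [Real.sqrt_mul (by norm_num)]
            ring
    have ha_le : a ≤ m0 := by
      rw [ha]
      nlinarith
    calc pstar * Δ + Real.sqrt (5 * (pstar * Δ) * Real.log n) = m0 + a := rfl
      _ ≤ 2 * m0 := by linarith
      _ ≤ 2 * (2 * Real.sqrt 5 * Real.sqrt n) := by linarith
      _ = 4 * Real.sqrt 5 * Real.sqrt n := by ring
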